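/- Let p ≥ 1, let I₀ and I₁ be disjoint finite index sets, and let x^(i) ∈ ℝ^p for each i ∈ I₀ ∪ I₁. For every point x̄ ∈ ℝ^p the following are equivalent: (1) for every a ∈ ℝ^p and b ∈ ℝ such that ⟪a, x^(i)⟫ − b ≤ 0 for all i ∈ I₀ and ⟪a, x^(i)⟫ − b ≥ 0 for all i ∈ I₁, one has ⟪a, x̄⟫ − b ≤ 0; (2) there exists u : I₀ ∪ I₁ → ℝ with u_i ≥ 0 for all i, such that Σ_{i∈I₀} u_i − Σ_{i∈I₁} u_i = 1 and Σ_{i∈I₀} u_i • x^(i) − Σ_{i∈I₁} u_i • x^(i) = x̄. (This is the characterization of the 'No' region induced by factual queries.) -/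

import Mathlib

open Finset

lemma cone_isClosed_fin : ∀ (n : ℕ) {E : Type*} [NormedAddCommGroup E] [NormedSpace ℝ E]
    [FiniteDimensional ℝ E] (v : Fin n → E),
    IsClosed {z : E | ∃ c : Fin n → ℝ, (∀ i, 0 ≤ c i) ∧ ∑ i, c i • v i = z} := by
  intro n
  induction n with
  | zero =>
    intro E _ _ _ v
    convert isClosed_singleton (x := (0 : E)) using 1
    ext z
    simp [eq_comm]
  | succ n ih =>
    intro E _ _ _ v
    by_cases hli : LinearIndependent ℝ v
    · -- image of the closed nonnegative orthant under a closed embedding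
      set L : (Fin (n + 1) → ℝ) →ₗ[ℝ] E :=
        { toFun := fun c => ∑ i, c i • v i
          map_add' := by intro a b; simp [add_smul, Finset.sum_add_distrib]
          map_smul' := by intro m a; simp [smul_smul, Finset.smul_sum] } with hL
      have hker : LinearMap.ker L = ⊥ := by
        rw [LinearMap.ker_eq_bot']
        intro m hm
        have := Fintype.linearIndependent_iff.mp hli m hm
        funext i; exact this i
      have hemb := LinearMap.isClosedEmbedding_of_injective hker (f := L)
      have hKcl : IsClosed {c : Fin (n + 1) → ℝ | ∀ i, 0 ≤ c i} := by
        have : {c : Fin (n + 1) → ℝ | ∀ i, 0 ≤ c i} = ⋂ i, {c | 0 ≤ c i} := by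
          ext c; simp
        rw [this]
        exact isClosed_iInter fun i => isClosed_le continuous_const (continuous_apply i)
      have himg : {z : E | ∃ c : Fin (n + 1) → ℝ, (∀ i, 0 ≤ c i) ∧ ∑ i, c i • v i = z}
          = L '' {c : Fin (n + 1) → ℝ | ∀ i, 0 ≤ c i} := by
        ext z
        simp only [Set.mem_setOf_eq, Set.mem_image]
        constructor
        · rintro ⟨c, hc, rfl⟩; exact ⟨c, hc, rfl⟩
        · rintro ⟨c, hc, rfl⟩; exact ⟨c, hc, rfl⟩
      rw [himg]
      exact hemb.isClosedMap _ hKcl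
    · obtain ⟨d, hd0, i₀, hpos⟩ :
          ∃ d : Fin (n + 1) → ℝ, ∑ i, d i • v i = 0 ∧ ∃ i, 0 < d i := by
        obtain ⟨g, hg0, i₀, hi₀⟩ := Fintype.not_linearIndependent_iff.mp hli
        rcases hi₀.lt_or_gt with h | h
        · exact ⟨-g, by simpa using hg0, i₀, by simpa using h⟩
        · exact ⟨g, hg0, i₀, h⟩
      have hunion : {z : E | ∃ c : Fin (n + 1) → ℝ, (∀ i, 0 ≤ c i) ∧ ∑ i, c i • v i = z}
          = ⋃ j : Fin (n + 1),
            {z : E | ∃ c : Fin n → ℝ, (∀ i, 0 ≤ c i) ∧ ∑ i, c i • v (j.succAbove i) = z} := by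
        ext z
        simp only [Set.mem_setOf_eq, Set.mem_iUnion]
        constructor
        · rintro ⟨c, hc, rfl⟩
          set T : Finset (Fin (n + 1)) := univ.filter fun i => 0 < d i with hT
          have hTne : T.Nonempty := ⟨i₀, by simp [hT, hpos]⟩
          obtain ⟨j, hjT, hjmin⟩ := T.exists_mem_eq_inf' hTne fun i => c i / d i
          have hdj : 0 < d j := by simpa [hT] using hjT
          set t : ℝ := T.inf' hTne fun i => c i / d i with ht
          have ht0 : 0 ≤ t := hjmin ▸ div_nonneg (hc j) hdj.le
          set c' : Fin (n + 1) → ℝ := fun i => c i - t * d i with hc'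
          have hc'0 : ∀ i, 0 ≤ c' i := by
            intro i
            by_cases hdi : 0 < d i
            · have : t ≤ c i / d i := Finset.inf'_le _ (by simp [hT, hdi])
              have := (le_div_iff₀ hdi).mp this
              simpa [hc'] using this
            · push_neg at hdi
              have : t * d i ≤ 0 := mul_nonpos_of_nonneg_of_nonpos ht0 hdi
              simp only [hc', sub_nonneg]
              exact this.trans (hc i)
          have hc'j : c' j = 0 := by
            simp only [hc', hjmin]
            field_simp
            ring
          have hc'sum : ∑ i, c' i • v i = ∑ i, c i • v i := by
            simp only [hc', sub_smul, Finset.sum_sub_distrib, mul_smul]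
            rw [← Finset.smul_sum, hd0, smul_zero, sub_zero]
          refine ⟨j, fun i => c' (j.succAbove i), fun i => hc'0 _, ?_⟩
          rw [← hc'sum, Fin.sum_univ_succAbove (fun i => c' i • v i) j, hc'j, zero_smul, zero_add]
        · rintro ⟨j, c, hc, rfl⟩
          refine ⟨(j.insertNth (0:ℝ) c : Fin (n+1) → ℝ), ?_, ?_⟩
          · intro k
            by_cases hk : k = j
            · rw [hk, Fin.insertNth_apply_same]
            · obtain ⟨i, rfl⟩ := Fin.exists_succAbove_eq hk
              rw [Fin.insertNth_apply_succAbove]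
              exact hc i
          · rw [Fin.sum_univ_succAbove (fun i => (j.insertNth (0:ℝ) c : Fin (n+1) → ℝ) i • v i) j,
              Fin.insertNth_apply_same, zero_smul, zero_add]
            refine Finset.sum_congr rfl fun i _ => ?_
            rw [Fin.insertNth_apply_succAbove]
      rw [hunion]
      exact isClosed_iUnion_of_finite fun j => ih _

lemma cone_isClosed {ι' : Type*} [Fintype ι'] {E : Type*} [NormedAddCommGroup E]
    [NormedSpace ℝ E] [FiniteDimensional ℝ E] (v : ι' → E) :
    IsClosed {z : E | ∃ c : ι' → ℝ, (∀ i, 0 ≤ c i) ∧ ∑ i, c i • v i = z} := by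
  have e := Fintype.equivFin ι'
  have : {z : E | ∃ c : ι' → ℝ, (∀ i, 0 ≤ c i) ∧ ∑ i, c i • v i = z}
      = {z : E | ∃ c : Fin (Fintype.card ι') → ℝ, (∀ i, 0 ≤ c i) ∧
          ∑ i, c i • v (e.symm i) = z} := by
    ext z
    constructor
    · rintro ⟨c, hc, rfl⟩
      exact ⟨fun i => c (e.symm i), fun i => hc _,
        Fintype.sum_equiv e.symm _ _ (by intro i; simp)⟩
    · rintro ⟨c, hc, rfl⟩
      exact ⟨fun i => c (e i), fun i => hc _,
        Fintype.sum_equiv e _ _ (by intro i; simp)⟩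
  rw [this]
  exact cone_isClosed_fin _ _

/-- The 'No' region induced by factual queries: a point is classified 'No' by every
consistent linear classifier iff it admits the dual multiplier representation. -/
theorem no_region_characterization {p : ℕ} (hp : 1 ≤ p) {ι : Type*} [DecidableEq ι]
    (I₀ I₁ : Finset ι) (hdisj : Disjoint I₀ I₁)
    (x : ι → (Fin p → ℝ)) (xbar : Fin p → ℝ) :
    ((∀ (a : Fin p → ℝ) (b : ℝ),
        (∀ i ∈ I₀, (∑ k, a k * x i k) - b ≤ 0) →
        (∀ i ∈ I₁, (∑ k, a k * x i k) - b ≥ 0) →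
        (∑ k, a k * xbar k) - b ≤ 0)
      ↔ (∃ u : ι → ℝ, (∀ i ∈ I₀ ∪ I₁, 0 ≤ u i) ∧
          (∑ i ∈ I₀, u i) - (∑ i ∈ I₁, u i) = 1 ∧
          (∑ i ∈ I₀, u i • x i) - (∑ i ∈ I₁, u i • x i) = xbar)) := by
  classical
  constructor
  · -- hard direction via separation
    intro hcond
    by_contra hno
    set S : Finset ι := I₀ ∪ I₁ with hS
    let e : ι → EuclideanSpace ℝ (Fin (p + 1)) := fun i => WithLp.toLp 2 (Fin.snoc (x i) 1 : Fin (p + 1) → ℝ)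
    let g : ι → EuclideanSpace ℝ (Fin (p + 1)) := fun i => if i ∈ I₀ then e i else -e i
    have hsum_apply : ∀ (s : Finset ι) (f : ι → EuclideanSpace ℝ (Fin (p + 1))) (k : Fin (p + 1)),
        (∑ i ∈ s, f i) k = ∑ i ∈ s, f i k := fun s f k => by rw [WithLp.ofLp_sum, Finset.sum_apply]
    set C : Set (EuclideanSpace ℝ (Fin (p + 1))) :=
      {z | ∃ u : ι → ℝ, (∀ i ∈ S, 0 ≤ u i) ∧ ∑ i ∈ S, u i • g i = z} with hC
    have hsplit : ∀ u : ι → ℝ, ∑ i ∈ S, u i • g i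
        = ∑ i ∈ I₀, u i • e i - ∑ i ∈ I₁, u i • e i := by
      intro u
      rw [hS, Finset.sum_union hdisj, sub_eq_add_neg]
      congr 1
      · exact Finset.sum_congr rfl fun i hi => by simp only [g, if_pos hi]
      · rw [← Finset.sum_neg_distrib]
        refine Finset.sum_congr rfl fun i hi => ?_
        have hni : i ∉ I₀ := Finset.disjoint_right.mp hdisj hi
        simp only [g, if_neg hni, smul_neg]
    let K : ConvexCone ℝ (EuclideanSpace ℝ (Fin (p + 1))) :=
      { carrier := C
        smul_mem' := by
          rintro c hc z ⟨u, hu, rfl⟩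
          refine ⟨fun i => c * u i, fun i hi => mul_nonneg hc.le (hu i hi), ?_⟩
          rw [Finset.smul_sum]
          exact Finset.sum_congr rfl fun i _ => by rw [smul_smul]
        add_mem' := by
          rintro z ⟨u, hu, rfl⟩ w ⟨u', hu', rfl⟩
          refine ⟨fun i => u i + u' i, fun i hi => add_nonneg (hu i hi) (hu' i hi), ?_⟩
          rw [← Finset.sum_add_distrib]
          exact Finset.sum_congr rfl fun i _ => by rw [add_smul] }
    have h0C : (0 : EuclideanSpace ℝ (Fin (p + 1))) ∈ C :=
      ⟨fun _ => 0, fun i _ => le_refl _, by simp⟩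
    have hCclosed : IsClosed C := by
      have hkey := cone_isClosed (fun i : ↥S => g ↑i)
      have hCeq : C = {z | ∃ c : ↥S → ℝ, (∀ i, 0 ≤ c i) ∧ ∑ i : ↥S, c i • g ↑i = z} := by
        ext z
        constructor
        · rintro ⟨u, hu, rfl⟩
          exact ⟨fun i => u ↑i, fun i => hu _ i.2,
            Finset.sum_coe_sort S (fun i => u i • g i)⟩
        · rintro ⟨c, hc, rfl⟩
          refine ⟨fun i => if h : i ∈ S then c ⟨i, h⟩ else 0,
            fun i hi => by simp only [dif_pos hi]; exact hc _, ?_⟩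
          rw [← Finset.sum_coe_sort S]
          exact Finset.sum_congr rfl fun i _ => by simp only [dif_pos i.2, Subtype.coe_eta]
      rw [hCeq]
      exact hkey
    set zbar : EuclideanSpace ℝ (Fin (p + 1)) := WithLp.toLp 2 (Fin.snoc xbar 1 : Fin (p + 1) → ℝ) with hzbar
    have hzC : zbar ∉ C := by
      rintro ⟨u, hu, husum⟩
      apply hno
      rw [hsplit] at husum
      have happ : ∀ k : Fin (p + 1), (∑ i ∈ I₀, u i • e i) k - (∑ i ∈ I₁, u i • e i) k
          = zbar k := fun k => by rw [← husum]; rfl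
      refine ⟨u, hu, ?_, ?_⟩
      · have h1 := happ (Fin.last p)
        rw [hsum_apply, hsum_apply] at h1
        simp only [PiLp.smul_apply, smul_eq_mul] at h1
        have he_last : ∀ i : ι, (e i) (Fin.last p) = 1 := fun i => (Fin.snoc_last _ _ : Fin.snoc (α := fun _ => ℝ) (x i) 1 (Fin.last p) = 1)
        simp only [he_last, mul_one] at h1
        have hz1 : zbar (Fin.last p) = 1 := (Fin.snoc_last _ _ : Fin.snoc (α := fun _ => ℝ) xbar 1 (Fin.last p) = 1)
        rwa [hz1] at h1
      · funext k
        have h2 := happ (Fin.castSucc k)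
        rw [hsum_apply, hsum_apply] at h2
        simp only [PiLp.smul_apply, smul_eq_mul] at h2
        have he_cast : ∀ i : ι, (e i) (Fin.castSucc k) = x i k := fun i =>
          (Fin.snoc_castSucc _ _ _ : Fin.snoc (α := fun _ => ℝ) (x i) 1 (Fin.castSucc k) = x i k)
        simp only [he_cast] at h2
        have hzk : zbar (Fin.castSucc k) = xbar k := (Fin.snoc_castSucc _ _ _ : Fin.snoc (α := fun _ => ℝ) xbar 1 (Fin.castSucc k) = xbar k)
        rw [hzk] at h2
        have hg : ∀ (J : Finset ι), (∑ i ∈ J, u i • x i) k = ∑ i ∈ J, u i * x i k := fun J => by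
          rw [Finset.sum_apply]; rfl
        show (∑ i ∈ I₀, u i • x i) k - (∑ i ∈ I₁, u i • x i) k = xbar k
        rw [hg, hg]
        exact h2
    have hmem0 : ∀ i ∈ I₀, e i ∈ C := by
      intro i hi
      refine ⟨fun j => if j = i then 1 else 0, fun j _ => by positivity, ?_⟩
      simp only [ite_smul, one_smul, zero_smul]
      rw [Finset.sum_ite_eq' S i g]
      simp only [hS, Finset.mem_union, hi, true_or, if_true, g, if_pos hi]
    have hmem1 : ∀ i ∈ I₁, -e i ∈ C := by
      intro i hi
      have hni : i ∉ I₀ := Finset.disjoint_right.mp hdisj hi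
      refine ⟨fun j => if j = i then 1 else 0, fun j _ => by positivity, ?_⟩
      simp only [ite_smul, one_smul, zero_smul]
      rw [Finset.sum_ite_eq' S i g]
      simp only [hS, Finset.mem_union, hi, or_true, if_true, g, if_neg hni]
    let PC : ProperCone ℝ (EuclideanSpace ℝ (Fin (p + 1))) :=
      { carrier := C
        add_mem' := fun ha hb => K.add_mem' ha hb
        zero_mem' := h0C
        smul_mem' := fun c z hz => by
            rcases hz with ⟨u, hu, rfl⟩
            exact ⟨fun i => (c : ℝ) * u i, fun i hi => mul_nonneg c.2 (hu i hi), by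
              rw [Finset.smul_sum]
              exact Finset.sum_congr rfl fun i _ => by show ((c : ℝ) * u i) • g i = (c : ℝ) • u i • g i; rw [smul_smul]⟩
        isClosed' := hCclosed }
    obtain ⟨y, hy, hyz⟩ :=
      ProperCone.hyperplane_separation' (C := PC) hzC
    have hinner_e : ∀ i : ι, (inner ℝ (e i) y)
        = (∑ k, x i k * y (Fin.castSucc k)) + y (Fin.last p) := by
      intro i
      rw [PiLp.inner_apply]
      simp only [RCLike.inner_apply, conj_trivial]
      rw [Fin.sum_univ_castSucc]
      simp only [e, WithLp.ofLp_toLp, Fin.snoc_castSucc, Fin.snoc_last, one_mul]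
      simp only [mul_comm, mul_one, one_mul]
    have hinner_z : (inner ℝ zbar y)
        = (∑ k, xbar k * y (Fin.castSucc k)) + y (Fin.last p) := by
      rw [PiLp.inner_apply]
      simp only [RCLike.inner_apply, conj_trivial]
      rw [Fin.sum_univ_castSucc]
      simp only [hzbar, WithLp.ofLp_toLp, Fin.snoc_castSucc, Fin.snoc_last, one_mul]
      simp only [mul_comm, mul_one, one_mul]
    set a : Fin p → ℝ := fun k => -(y (Fin.castSucc k)) with ha
    set b : ℝ := y (Fin.last p) with hb
    have hsum_a : ∀ w : Fin p → ℝ, ∑ k, a k * w k = -(∑ k, w k * y (Fin.castSucc k)) := by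
      intro w
      rw [← Finset.sum_neg_distrib]
      exact Finset.sum_congr rfl fun k _ => by rw [ha]; ring
    have h0' : ∀ i ∈ I₀, (∑ k, a k * x i k) - b ≤ 0 := by
      intro i hi
      have hyi := hy (e i) (hmem0 i hi)
      rw [hinner_e i] at hyi
      rw [hsum_a (x i)]
      linarith
    have h1' : ∀ i ∈ I₁, (∑ k, a k * x i k) - b ≥ 0 := by
      intro i hi
      have hyi := hy (-e i) (hmem1 i hi)
      rw [inner_neg_left, hinner_e i] at hyi
      rw [hsum_a (x i)]
      linarith
    have hfin := hcond a b h0' h1'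
    rw [hsum_a xbar] at hfin
    rw [hinner_z] at hyz
    linarith
  · -- easy direction
    rintro ⟨u, hu, hsum1, hsumx⟩ a b h0 h1
    set s : ι → ℝ := fun i => ∑ k, a k * x i k with hsdef
    have hx : ∑ k, a k * xbar k = ∑ i ∈ I₀, u i * s i - ∑ i ∈ I₁, u i * s i := by
      rw [← hsumx]
      have expand : ∀ (J : Finset ι), ∑ k, a k * (∑ i ∈ J, u i • x i) k
          = ∑ i ∈ J, u i * s i := by
        intro J
        have happ : ∀ k, (∑ i ∈ J, u i • x i) k = ∑ i ∈ J, u i * x i k := by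
          intro k; rw [Finset.sum_apply]; rfl
        simp_rw [happ, Finset.mul_sum]
        rw [Finset.sum_comm]
        refine Finset.sum_congr rfl fun i _ => ?_
        rw [hsdef, Finset.mul_sum]
        exact Finset.sum_congr rfl fun k _ => by ring
      have hsub : ∀ k, (∑ i ∈ I₀, u i • x i - ∑ i ∈ I₁, u i • x i) k
          = (∑ i ∈ I₀, u i • x i) k - (∑ i ∈ I₁, u i • x i) k := fun k => rfl
      simp_rw [hsub, mul_sub, Finset.sum_sub_distrib]
      rw [expand I₀, expand I₁]
    have hbb : (∑ i ∈ I₀, u i) * b - (∑ i ∈ I₁, u i) * b = b := by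
      rw [← sub_mul, hsum1, one_mul]
    have hexp : ∀ (J : Finset ι), ∑ i ∈ J, u i * (s i - b)
        = ∑ i ∈ J, u i * s i - (∑ i ∈ J, u i) * b := by
      intro J
      rw [Finset.sum_mul]
      simp_rw [mul_sub]
      rw [Finset.sum_sub_distrib]
    have hA : ∑ i ∈ I₀, u i * (s i - b) ≤ 0 :=
      Finset.sum_nonpos fun i hi =>
        mul_nonpos_iff.mpr (Or.inl ⟨hu i (Finset.mem_union_left _ hi), h0 i hi⟩)
    have hB : 0 ≤ ∑ i ∈ I₁, u i * (s i - b) :=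
      Finset.sum_nonneg fun i hi =>
        mul_nonneg (hu i (Finset.mem_union_right _ hi)) (by have := h1 i hi; linarith)
    rw [hexp I₀] at hA
    rw [hexp I₁] at hB
    linarith
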